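/- Consider a quasi-exact structure Λ = a·∂₁(pq)·∂₂∧∂₃ + a·∂₂(pq)·∂₃∧∂₁ + b·∂₃(pq)·∂₁∧∂₂, where p = p(x,y) depends only on x,y, q = q(z) depends only on z, and b/a = β/α ∈ ℚ*₊ in lowest terms. Then p^α · q^β is a Casimir function of Λ. -/
import Mathlib


open MvPolynomial

/-- The Poisson bracket `{f,g} = Λ(df,dg)` of the bivector on ℝ³ with components
`A23 = Λ²³`, `A31 = Λ³¹`, `A12 = Λ¹²` (coordinates `x = X 0`, `y = X 1`, `z = X 2`). -/
noncomputable def pbr (A23 A31 A12 f g : MvPolynomial (Fin 3) ℝ) : MvPolynomial (Fin 3) ℝ :=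
  A23 * (pderiv 1 f * pderiv 2 g - pderiv 2 f * pderiv 1 g)
  + A31 * (pderiv 2 f * pderiv 0 g - pderiv 0 f * pderiv 2 g)
  + A12 * (pderiv 0 f * pderiv 1 g - pderiv 1 f * pderiv 0 g)

/-- Quasi-exact structure `Λ = a·∂₁(pq)·∂₂∧∂₃ + a·∂₂(pq)·∂₃∧∂₁ + b·∂₃(pq)·∂₁∧∂₂`
with `p = p(x,y)`, `q = q(z)`, and `b/a = β/α ∈ ℚ*₊` in lowest terms.
Then `p^α · q^β` is a Casimir function of Λ. -/
theorem stmt7 (a b : ℝ) (ha : a ≠ 0) (hb : b ≠ 0)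
    (p q : MvPolynomial (Fin 3) ℝ)
    (hp : pderiv 2 p = 0) (hq0 : pderiv 0 q = 0) (hq1 : pderiv 1 q = 0)
    (α β : ℕ) (hα : 0 < α) (hβ : 0 < β) (hcop : Nat.Coprime α β)
    (hratio : b * (α : ℝ) = a * (β : ℝ)) :
    ∀ f : MvPolynomial (Fin 3) ℝ,
      pbr (C a * pderiv 0 (p * q)) (C a * pderiv 1 (p * q)) (C b * pderiv 2 (p * q))
        (p ^ α * q ^ β) f = 0 := by
  obtain ⟨m, rfl⟩ := Nat.exists_eq_succ_of_ne_zero hα.ne'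
  obtain ⟨n, rfl⟩ := Nat.exists_eq_succ_of_ne_zero hβ.ne'
  intro f
  have hr : (((m:ℕ):MvPolynomial (Fin 3) ℝ) + 1) * C b = (((n:ℕ):MvPolynomial (Fin 3) ℝ) + 1) * C a := by
    have h : (C (b * ((m+1:ℕ):ℝ)) : MvPolynomial (Fin 3) ℝ) = C (a * ((n+1:ℕ):ℝ)) := by
      rw [hratio]
    rw [C_mul, C_mul, map_natCast, map_natCast] at h
    push_cast at h
    linear_combination h
  simp only [Nat.succ_eq_add_one, pbr, pderiv_mul, pderiv_pow, hp, hq0, hq1, mul_zero, zero_mul,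
    add_zero, zero_add, Nat.add_sub_cancel, C_mul] at *
  push_cast at hr ⊢
  linear_combination (p ^ (m+1) * q ^ (n+1) * pderiv 2 q *
    (pderiv 0 p * pderiv 1 f - pderiv 1 p * pderiv 0 f)) * hr
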